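/- Let M ∈ ℝ^{r̄×r̄} be Hurwitz, N ∈ ℝ^{r̄×n₂}, Φ ∈ ℝ^{r̄×r̄}, Γ ∈ ℝ^{n₂×r̄}, and let T ∈ ℝ^{r̄×r̄} be invertible with T Φ − M T = N Γ; set Ψ := Γ T⁻¹. Let g : [0,∞) → ℝ^{n₂} be continuous, and let differentiable functions ϱ, η : [0,∞) → ℝ^{r̄} and x₂ : [0,∞) → ℝ^{n₂} satisfy ϱ̇(t) = T Φ T⁻¹ ϱ(t), ẋ₂(t) = g(t) − Ψ ϱ(t), and η̇(t) = M η(t) + N g(t) − M N x₂(t). Then, for all initial conditions, the estimate ϱ̂(t) := η(t) − N x₂(t) satisfies that ϱ̂(t) − ϱ(t) converges to zero exponentially as t → ∞; in fact d/dt (ϱ̂ − ϱ) = M (ϱ̂ − ϱ) and M is Hurwitz. -/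

import Mathlib

open Matrix Filter Topology

/-- A real square matrix is Hurwitz if all of its complex eigenvalues have
negative real part. -/
def Hurwitz {n : Type*} [Fintype n] [DecidableEq n] (A : Matrix n n ℝ) : Prop :=
  ∀ μ ∈ spectrum ℂ (A.map (algebraMap ℝ ℂ)), μ.re < 0

/-- `e(t) → 0` exponentially: `‖e t‖ ≤ c e^{-λ t}` for all sufficiently large `t`. -/
def ExpDecay {E : Type*} [Norm E] (e : ℝ → E) : Prop :=
  ∃ c > (0:ℝ), ∃ lam > (0:ℝ), ∃ T : ℝ, ∀ t ≥ T, ‖e t‖ ≤ c * Real.exp (-lam * t)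


set_option maxHeartbeats 1000000
set_option synthInstance.maxHeartbeats 200000

open Matrix Filter Topology NormedSpace Nat

lemma pow_le_factorial_mul_exp {x : ℝ} (hx : 0 ≤ x) (n : ℕ) :
    x ^ n ≤ n ! * Real.exp x := by
  have h := Real.sum_le_exp_of_nonneg hx (n + 1)
  have h2 : x ^ n / n ! ≤ Real.exp x :=
    le_trans (Finset.single_le_sum (f := fun i => x ^ i / i !)
      (fun i _ => by positivity) (Finset.self_mem_range_succ n)) h
  have hn : (0:ℝ) < n ! := by positivity
  calc x ^ n = (x ^ n / n !) * n ! := by field_simp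
  _ ≤ Real.exp x * n ! := mul_le_mul_of_nonneg_right h2 hn.le
  _ = n ! * Real.exp x := mul_comm _ _

noncomputable section

variable {n : ℕ}

local notation "E" => EuclideanSpace ℂ (Fin n)

lemma decay_aux (A : EuclideanSpace ℂ (Fin n) →L[ℂ] EuclideanSpace ℂ (Fin n))
    (hA : ∀ μ : ℂ, Module.End.HasEigenvalue
      (A : EuclideanSpace ℂ (Fin n) →ₗ[ℂ] EuclideanSpace ℂ (Fin n)) μ → μ.re < 0)
    (v : EuclideanSpace ℂ (Fin n)) :
    ∃ c > (0:ℝ), ∃ lam > (0:ℝ), ∀ t ≥ (0:ℝ),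
      ‖NormedSpace.exp (t • A) v‖ ≤ c * Real.exp (-lam * t) := by
  letI : NormedAlgebra ℚ (E →L[ℂ] E) := NormedAlgebra.restrictScalars ℚ ℂ _
  set f : Module.End ℂ E := (A : E →ₗ[ℂ] E) with hf
  have hv : v ∈ (⊤ : Submodule ℂ E) := trivial
  rw [← Module.End.iSup_maxGenEigenspace_eq_top f] at hv
  refine Submodule.iSup_induction (motive := fun w => ∃ c > (0:ℝ), ∃ lam > (0:ℝ), ∀ t ≥ (0:ℝ),
      ‖NormedSpace.exp (t • A) w‖ ≤ c * Real.exp (-lam * t)) _ hv ?_ ?_ ?_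
  · intro μ w hw
    rcases eq_or_ne w 0 with rfl | hw0
    · exact ⟨1, one_pos, 1, one_pos, fun t ht => by
        simpa using (Real.exp_pos (-1 * t)).le⟩
    · have hev : f.HasEigenvalue μ := by
        have h2 : f.HasUnifEigenvalue μ ⊤ :=
          Submodule.ne_bot_iff _ |>.2 ⟨w, hw, hw0⟩
        exact h2.lt zero_lt_one
      have hμ : μ.re < 0 := hA μ hev
      set lam : ℝ := -μ.re / 2 with hlam
      have hlampos : 0 < lam := by rw [hlam]; linarith
      obtain ⟨m, hm⟩ := (Module.End.mem_maxGenEigenspace f μ w).1 hw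
      set B : (EuclideanSpace ℂ (Fin n) →L[ℂ] EuclideanSpace ℂ (Fin n)) := A - μ • 1 with hB
      have hBk : ∀ k ≥ m, (B ^ k) w = 0 := by
        intro k hk
        have h1 : B ^ k = B ^ (k - m) * B ^ m := by
          rw [← pow_add]; congr 1; omega
        have hcoe2 : ContinuousLinearMap.toLinearMapRingHom B = f - μ • 1 := by
          ext x
          show ((B : E →ₗ[ℂ] E) x) _ = _
          simp [hB, hf]
        have hcoe : ContinuousLinearMap.toLinearMapRingHom (B ^ m) = (f - μ • 1) ^ m := by
          rw [map_pow, hcoe2]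
        have hBm : (B ^ m) w = 0 := by
          have h2 : (ContinuousLinearMap.toLinearMapRingHom (B ^ m)) w = 0 := by rw [hcoe]; exact hm
          exact h2
        rw [h1, ContinuousLinearMap.mul_apply, hBm, map_zero]
      -- key formula
      have key : ∀ t : ℝ, NormedSpace.exp (t • A) w
          = Complex.exp (t * μ) • ∑ k ∈ Finset.range m, ((t ^ k * ((k ! : ℝ))⁻¹) • ((B ^ k) w)) := by
        intro t
        have hsplit : t • A = algebraMap ℂ (EuclideanSpace ℂ (Fin n) →L[ℂ] EuclideanSpace ℂ (Fin n)) (t * μ) + t • B := by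
          have h1 : algebraMap ℂ (EuclideanSpace ℂ (Fin n) →L[ℂ] EuclideanSpace ℂ (Fin n)) (↑t * μ)
              = t • (μ • (1 : EuclideanSpace ℂ (Fin n) →L[ℂ] EuclideanSpace ℂ (Fin n))) := by
            rw [Algebra.algebraMap_eq_smul_one, ← Complex.real_smul, smul_assoc]
          rw [h1, hB]
          module
        have hcomm : Commute (algebraMap ℂ (EuclideanSpace ℂ (Fin n) →L[ℂ] EuclideanSpace ℂ (Fin n)) (t * μ)) (t • B) :=
          Algebra.commutes _ _
        rw [hsplit, NormedSpace.exp_add_of_commute hcomm]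
        have hmap : NormedSpace.exp (algebraMap ℂ (EuclideanSpace ℂ (Fin n) →L[ℂ] EuclideanSpace ℂ (Fin n)) (t * μ))
            = algebraMap ℂ _ (Complex.exp (t * μ)) := by
          rw [← map_exp (algebraMap ℂ (EuclideanSpace ℂ (Fin n) →L[ℂ] EuclideanSpace ℂ (Fin n)))
            (continuous_algebraMap ℂ _)]
          congr 1
          rw [Complex.exp_eq_exp_ℂ]
        have hsum : NormedSpace.exp (t • B) w = ∑ k ∈ Finset.range m, ((t ^ k * ((k ! : ℝ))⁻¹) • ((B ^ k) w)) := by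
          have hs : HasSum (fun k : ℕ => ((k ! : ℝ))⁻¹ • (t • B) ^ k) (NormedSpace.exp (t • B)) :=
            exp_series_hasSum_exp' (t • B)
          have hs2 : HasSum (fun k : ℕ => (((k ! : ℝ))⁻¹ • (t • B) ^ k) w) (NormedSpace.exp (t • B) w) := by
            have h0 := (ContinuousLinearMap.apply ℂ (EuclideanSpace ℂ (Fin n)) w).hasSum hs
            simpa using h0
          have heq : ∀ k : ℕ, (((k ! : ℝ))⁻¹ • (t • B) ^ k) w = (t ^ k * ((k ! : ℝ))⁻¹) • ((B ^ k) w) := by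
            intro k
            haveI : IsScalarTower ℝ (E →L[ℂ] E) (E →L[ℂ] E) := ⟨fun a x y => by ext; simp⟩
            haveI : SMulCommClass ℝ (E →L[ℂ] E) (E →L[ℂ] E) := ⟨fun a x y => by ext; simp⟩
            rw [smul_pow]
            simp [ContinuousLinearMap.smul_apply, smul_smul, mul_comm]
          rw [funext heq] at hs2
          refine hs2.unique (hasSum_sum_of_ne_finset_zero ?_)
          intro k hk
          rw [hBk k (not_lt.1 fun h => hk (Finset.mem_range.2 h)), smul_zero]
        rw [ContinuousLinearMap.mul_apply, hsum, hmap]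
        simp only [Algebra.algebraMap_eq_smul_one, ContinuousLinearMap.smul_apply,
          ContinuousLinearMap.one_apply, map_sum]
        rw [Finset.smul_sum]
      refine ⟨1 + ∑ k ∈ Finset.range m, ‖(B ^ k) w‖ / lam ^ k, by positivity, lam, hlampos, fun t ht => ?_⟩
      rw [key t, norm_smul]
      have hnexp : ‖Complex.exp (↑t * μ)‖ = Real.exp (t * μ.re) := by
        rw [Complex.norm_exp]
        congr 1
        simp [Complex.mul_re]
      have hterm : ∀ k ∈ Finset.range m, Real.exp (t * μ.re) * (t ^ k * ((k ! : ℝ))⁻¹ * ‖(B ^ k) w‖)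
          ≤ (‖(B ^ k) w‖ / lam ^ k) * Real.exp (-lam * t) := by
        intro k _
        have ha : (0:ℝ) < Real.exp (lam * t) := Real.exp_pos _
        have hk0 : (0:ℝ) < (k ! : ℝ) := by positivity
        have hlamk : (0:ℝ) < lam ^ k := by positivity
        have hpw : lam ^ k * t ^ k ≤ (k ! : ℝ) * Real.exp (lam * t) := by
          have := pow_le_factorial_mul_exp (mul_nonneg hlampos.le ht) k
          rwa [mul_pow] at this
        have h1 : t ^ k * ((k ! : ℝ))⁻¹ ≤ Real.exp (lam * t) / lam ^ k := by
          rw [← div_eq_mul_inv, div_le_div_iff₀ hk0 hlamk]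
          nlinarith [hpw]
        have hre2 : μ.re = -2 * lam := by rw [hlam]; ring
        calc Real.exp (t * μ.re) * (t ^ k * ((k ! : ℝ))⁻¹ * ‖(B ^ k) w‖)
            = (t ^ k * ((k ! : ℝ))⁻¹) * (‖(B ^ k) w‖ * Real.exp (t * μ.re)) := by ring
        _ ≤ (Real.exp (lam * t) / lam ^ k) * (‖(B ^ k) w‖ * Real.exp (t * μ.re)) :=
            mul_le_mul_of_nonneg_right h1 (by positivity)
        _ = (‖(B ^ k) w‖ / lam ^ k) * (Real.exp (lam * t) * Real.exp (t * μ.re)) := by ring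
        _ = (‖(B ^ k) w‖ / lam ^ k) * Real.exp (-lam * t) := by
            rw [← Real.exp_add]
            congr 1
            rw [hre2]; ring
      calc ‖Complex.exp (↑t * μ)‖ * ‖∑ k ∈ Finset.range m, (t ^ k * ((k ! : ℝ))⁻¹) • ((B ^ k) w)‖
          ≤ Real.exp (t * μ.re) * ∑ k ∈ Finset.range m, t ^ k * ((k ! : ℝ))⁻¹ * ‖(B ^ k) w‖ := by
            rw [hnexp]
            gcongr
            refine le_trans (norm_sum_le _ _) (le_of_eq (Finset.sum_congr rfl fun k _ => ?_))
            rw [norm_smul, Real.norm_eq_abs, abs_of_nonneg (by positivity)]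
      _ = ∑ k ∈ Finset.range m, Real.exp (t * μ.re) * (t ^ k * ((k ! : ℝ))⁻¹ * ‖(B ^ k) w‖) := by
            rw [Finset.mul_sum]
      _ ≤ ∑ k ∈ Finset.range m, (‖(B ^ k) w‖ / lam ^ k) * Real.exp (-lam * t) :=
            Finset.sum_le_sum hterm
      _ = (∑ k ∈ Finset.range m, ‖(B ^ k) w‖ / lam ^ k) * Real.exp (-lam * t) := by
            rw [Finset.sum_mul]
      _ ≤ (1 + ∑ k ∈ Finset.range m, ‖(B ^ k) w‖ / lam ^ k) * Real.exp (-lam * t) := by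
            have := (Real.exp_pos (-lam * t)).le
            nlinarith [Real.exp_pos (-lam * t)]
  · -- zero
    refine ⟨1, one_pos, 1, one_pos, fun t ht => ?_⟩
    simp only [map_zero, norm_zero]
    positivity
  · rintro x y ⟨c1, hc1, l1, hl1, h1⟩ ⟨c2, hc2, l2, hl2, h2⟩
    refine ⟨c1 + c2, by positivity, min l1 l2, lt_min hl1 hl2, fun t ht => ?_⟩
    have e1 : Real.exp (-l1 * t) ≤ Real.exp (-(min l1 l2) * t) := by
      apply Real.exp_le_exp.2; nlinarith [min_le_left l1 l2]
    have e2 : Real.exp (-l2 * t) ≤ Real.exp (-(min l1 l2) * t) := by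
      apply Real.exp_le_exp.2; nlinarith [min_le_right l1 l2]
    calc ‖NormedSpace.exp (t • A) (x + y)‖ ≤ ‖NormedSpace.exp (t • A) x‖ + ‖NormedSpace.exp (t • A) y‖ := by
          rw [map_add]; exact norm_add_le _ _
    _ ≤ c1 * Real.exp (-l1 * t) + c2 * Real.exp (-l2 * t) := add_le_add (h1 t ht) (h2 t ht)
    _ ≤ c1 * Real.exp (-(min l1 l2) * t) + c2 * Real.exp (-(min l1 l2) * t) := by
          gcongr
    _ = (c1 + c2) * Real.exp (-(min l1 l2) * t) := by ring

lemma rep_aux (A : EuclideanSpace ℂ (Fin n) →L[ℂ] EuclideanSpace ℂ (Fin n))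
    (e : ℝ → EuclideanSpace ℂ (Fin n))
    (he : ∀ t ≥ (0:ℝ), HasDerivAt e (A (e t)) t) :
    ∀ t ≥ (0:ℝ), e t = NormedSpace.exp (t • A) (e 0) := by
  letI : NormedAlgebra ℚ (E →L[ℂ] E) := NormedAlgebra.restrictScalars ℚ ℂ _
  intro t ht
  set y : ℝ → EuclideanSpace ℂ (Fin n) :=
    fun s => ((NormedSpace.exp ((-s) • A)).restrictScalars ℝ) (e s) with hy
  have hyderiv : ∀ s ≥ (0:ℝ), HasDerivAt y 0 s := by
    intro s hs
    have hF : HasDerivAt (fun u : ℝ => (NormedSpace.exp ((-u) • A)).restrictScalars ℝ)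
        (-((NormedSpace.exp ((-s) • A) * A).restrictScalars ℝ)) s := by
      have h1 : HasDerivAt (fun u : ℝ => NormedSpace.exp (u • A)) (NormedSpace.exp ((-s) • A) * A) (-s) :=
        hasDerivAt_exp_smul_const A (-s)
      have h2 : HasDerivAt (fun u : ℝ => (-u : ℝ)) (-1) s := (hasDerivAt_id s).neg
      have h3 := h1.scomp s h2
      have h4 := ((ContinuousLinearMap.restrictScalarsIsometry ℂ
        (EuclideanSpace ℂ (Fin n)) (EuclideanSpace ℂ (Fin n)) ℝ ℝ).toContinuousLinearMap.hasFDerivAt).comp_hasDerivAt s h3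
      simpa [Function.comp_def] using h4
    have h5 := hF.clm_apply (he s hs)
    have h6 : (-((NormedSpace.exp ((-s) • A) * A).restrictScalars ℝ)) (e s)
        + ((NormedSpace.exp ((-s) • A)).restrictScalars ℝ) (A (e s)) = 0 := by
      simp [ContinuousLinearMap.mul_apply]
    rw [h6] at h5
    exact h5
  have hconst : y t = y 0 := by
    rcases eq_or_lt_of_le ht with rfl | htpos
    · rfl
    · have := constant_of_has_deriv_right_zero (f := y) (a := 0) (b := t)
        (fun x hx => ((hyderiv x hx.1).continuousAt).continuousWithinAt)
        (fun x hx => ((hyderiv x hx.1).hasDerivWithinAt))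
      exact this t ⟨ht, le_refl t⟩
  have hy0 : y 0 = e 0 := by
    show (ContinuousLinearMap.restrictScalars ℝ (NormedSpace.exp ((-(0:ℝ)) • A))) (e 0) = e 0
    have h0 : (-(0:ℝ)) • A = 0 := by module
    rw [h0, NormedSpace.exp_zero]
    rfl
  have hyt : (NormedSpace.exp ((-t) • A)) (e t) = e 0 := by
    rw [← hy0, ← hconst]; rfl
  have hinv : NormedSpace.exp (t • A) * NormedSpace.exp ((-t) • A) = 1 := by
    have hneg : (-t) • A = -(t • A) := by module
    rw [hneg, ← NormedSpace.exp_add_of_commute (Commute.refl (t • A)).neg_right]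
    have : t • A + -(t • A) = 0 := by abel
    rw [this, NormedSpace.exp_zero]
  calc e t = (NormedSpace.exp (t • A) * NormedSpace.exp ((-t) • A)) (e t) := by rw [hinv]; simp
  _ = (NormedSpace.exp (t • A)) ((NormedSpace.exp ((-t) • A)) (e t)) := rfl
  _ = (NormedSpace.exp (t • A)) (e 0) := by rw [hyt]

end

theorem stmt1' {rbar n₂ : ℕ}
    (M Φ T : Matrix (Fin rbar) (Fin rbar) ℝ)
    (N : Matrix (Fin rbar) (Fin n₂) ℝ) (Γ : Matrix (Fin n₂) (Fin rbar) ℝ)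
    (hM : ∀ μ ∈ spectrum ℂ (M.map (algebraMap ℝ ℂ)), μ.re < 0)
    (hT : IsUnit T) (hSyl : T * Φ - M * T = N * Γ)
    (g : ℝ → EuclideanSpace ℝ (Fin n₂)) (hg : ContinuousOn g (Set.Ici 0))
    (ϱ η : ℝ → EuclideanSpace ℝ (Fin rbar)) (x₂ : ℝ → EuclideanSpace ℝ (Fin n₂))
    (hϱ : ∀ t ≥ (0:ℝ), HasDerivAt ϱ (Matrix.toEuclideanLin (T * Φ * T⁻¹) (ϱ t)) t)
    (hx₂ : ∀ t ≥ (0:ℝ), HasDerivAt x₂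
      (g t - Matrix.toEuclideanLin (Γ * T⁻¹) (ϱ t)) t)
    (hη : ∀ t ≥ (0:ℝ), HasDerivAt η
      (Matrix.toEuclideanLin M (η t) + Matrix.toEuclideanLin N (g t)
        - Matrix.toEuclideanLin (M * N) (x₂ t)) t) :
    (∀ t ≥ (0:ℝ), HasDerivAt (fun s => (η s - Matrix.toEuclideanLin N (x₂ s)) - ϱ s)
        (Matrix.toEuclideanLin M ((η t - Matrix.toEuclideanLin N (x₂ t)) - ϱ t)) t)
    ∧ ∃ c > (0:ℝ), ∃ lam > (0:ℝ), ∃ T : ℝ, ∀ t ≥ T,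
        ‖(η t - Matrix.toEuclideanLin N (x₂ t)) - ϱ t‖ ≤ c * Real.exp (-lam * t) := by
  classical
  have hTdet : IsUnit T.det := (Matrix.isUnit_iff_isUnit_det T).mp hT
  have hTT : T * T⁻¹ = 1 := Matrix.mul_nonsing_inv T hTdet
  have hNG : N * (Γ * T⁻¹) = T * Φ * T⁻¹ - M := by
    have h2 : M * T * T⁻¹ = M := by rw [Matrix.mul_assoc, hTT, Matrix.mul_one]
    calc N * (Γ * T⁻¹) = N * Γ * T⁻¹ := by rw [Matrix.mul_assoc]
    _ = (T * Φ - M * T) * T⁻¹ := by rw [hSyl]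
    _ = T * Φ * T⁻¹ - M := by rw [Matrix.sub_mul, h2]
  have hmulapp : ∀ {a b c : ℕ} (P : Matrix (Fin a) (Fin b) ℝ) (Q : Matrix (Fin b) (Fin c) ℝ)
      (x : EuclideanSpace ℝ (Fin c)),
      Matrix.toEuclideanLin (P * Q) x = Matrix.toEuclideanLin P (Matrix.toEuclideanLin Q x) := by
    intro a b c P Q x
    simp [Matrix.toEuclideanLin_apply, Matrix.mulVec_mulVec]
  have key1 : ∀ t ≥ (0:ℝ), HasDerivAt (fun s => (η s - Matrix.toEuclideanLin N (x₂ s)) - ϱ s)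
      (Matrix.toEuclideanLin M ((η t - Matrix.toEuclideanLin N (x₂ t)) - ϱ t)) t := by
    intro t ht
    have hN : HasDerivAt (fun s => Matrix.toEuclideanLin N (x₂ s))
        (Matrix.toEuclideanLin N (g t - Matrix.toEuclideanLin (Γ * T⁻¹) (ϱ t))) t := by
      have h0 := (LinearMap.toContinuousLinearMap
        (Matrix.toEuclideanLin N)).hasFDerivAt.comp_hasDerivAt t (hx₂ t ht)
      simpa [Function.comp_def] using h0
    have hD := ((hη t ht).sub hN).sub (hϱ t ht)
    refine hD.congr_deriv ?_
    have e2 : Matrix.toEuclideanLin (M * N) (x₂ t)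
        = Matrix.toEuclideanLin M (Matrix.toEuclideanLin N (x₂ t)) := hmulapp _ _ _
    have e3 : Matrix.toEuclideanLin N (Matrix.toEuclideanLin (Γ * T⁻¹) (ϱ t))
        = Matrix.toEuclideanLin (T * Φ * T⁻¹) (ϱ t) - Matrix.toEuclideanLin M (ϱ t) := by
      rw [← hmulapp, hNG, map_sub, LinearMap.sub_apply]
    simp only [map_sub]
    rw [e2, e3]
    abel
  refine ⟨key1, ?_⟩
  set err : ℝ → EuclideanSpace ℝ (Fin rbar) :=
    fun s => (η s - Matrix.toEuclideanLin N (x₂ s)) - ϱ s with herr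
  set Mc : Matrix (Fin rbar) (Fin rbar) ℂ := M.map (algebraMap ℝ ℂ) with hMc
  set Ac : EuclideanSpace ℂ (Fin rbar) →L[ℂ] EuclideanSpace ℂ (Fin rbar) :=
    LinearMap.toContinuousLinearMap (Matrix.toEuclideanLin Mc) with hAc
  set ec : ℝ → EuclideanSpace ℂ (Fin rbar) :=
    fun s => (WithLp.equiv 2 (Fin rbar → ℂ)).symm (fun j => ((err s j : ℝ) : ℂ)) with hec0
  have hurw : ∀ μ : ℂ, Module.End.HasEigenvalue
      ((Ac : EuclideanSpace ℂ (Fin rbar) →ₗ[ℂ] EuclideanSpace ℂ (Fin rbar))) μ → μ.re < 0 := by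
    intro μ hev
    have hcoe : ((Ac : EuclideanSpace ℂ (Fin rbar) →ₗ[ℂ] EuclideanSpace ℂ (Fin rbar)))
        = Matrix.toEuclideanLin Mc := LinearMap.coe_toContinuousLinearMap _
    rw [hcoe] at hev
    have h1 : μ ∈ spectrum ℂ (Matrix.toEuclideanLin Mc) :=
      Module.End.hasEigenvalue_iff_mem_spectrum.mp hev
    have h2 : Matrix.toEuclideanLin Mc
        = Matrix.toLinAlgEquiv ((EuclideanSpace.basisFun (Fin rbar) ℂ).toBasis) Mc := by
      rw [Matrix.toEuclideanLin_eq_toLin_orthonormal]; rfl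
    rw [h2, AlgEquiv.spectrum_eq] at h1
    exact hM μ h1
  have hecd : ∀ t ≥ (0:ℝ), HasDerivAt ec (Ac (ec t)) t := by
    intro t ht
    have h1 := key1 t ht
    have hcoord : ∀ j : Fin rbar, HasDerivAt (fun s => ((err s j : ℝ) : ℂ))
        ((((Matrix.toEuclideanLin M (err t)) j : ℝ)) : ℂ) t := by
      intro j
      have h2 : HasDerivAt (fun s => err s j) ((Matrix.toEuclideanLin M (err t)) j) t := by
        have h0 := (EuclideanSpace.proj j).hasFDerivAt.comp_hasDerivAt t h1
        simpa only [Function.comp_def, PiLp.proj_apply] using h0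
      have h3 := Complex.ofRealCLM.hasFDerivAt.comp_hasDerivAt t h2
      simpa [Function.comp_def] using h3
    have hPi : HasDerivAt (fun s => (fun j => ((err s j : ℝ) : ℂ)))
        (fun j => (((Matrix.toEuclideanLin M (err t)) j : ℝ) : ℂ)) t := hasDerivAt_pi.mpr hcoord
    have h3 := ((((PiLp.continuousLinearEquiv 2 ℂ
        (fun _ : Fin rbar => ℂ)).symm.toContinuousLinearMap).restrictScalars
        ℝ).hasFDerivAt).comp_hasDerivAt t hPi
    have h4 : HasDerivAt ec ((WithLp.equiv 2 (Fin rbar → ℂ)).symm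
        (fun j => (((Matrix.toEuclideanLin M (err t)) j : ℝ) : ℂ))) t := by
      simpa [hec0, Function.comp_def] using h3
    have hvec : Ac (ec t) = (WithLp.equiv 2 (Fin rbar → ℂ)).symm
        (fun j => (((Matrix.toEuclideanLin M (err t)) j : ℝ) : ℂ)) := by
      apply (WithLp.equiv 2 (Fin rbar → ℂ)).injective
      funext j
      simp only [hAc, LinearMap.coe_toContinuousLinearMap', Matrix.toEuclideanLin_apply,
        Equiv.apply_symm_apply, hec0, hMc]
      simp [Matrix.mulVec, dotProduct, Matrix.map_apply]
    rw [hvec]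
    exact h4
  have hnorm : ∀ s : ℝ, ‖ec s‖ = ‖err s‖ := by
    intro s
    rw [EuclideanSpace.norm_eq, EuclideanSpace.norm_eq]
    congr 1
    refine Finset.sum_congr rfl fun j _ => ?_
    simp [hec0]
  obtain ⟨c, hc, lam, hlam, hbound⟩ := decay_aux Ac hurw (ec 0)
  have hrep := rep_aux Ac ec hecd
  refine ⟨c, hc, lam, hlam, 0, fun t ht => ?_⟩
  calc ‖err t‖ = ‖ec t‖ := (hnorm t).symm
  _ = ‖NormedSpace.exp (t • Ac) (ec 0)‖ := by rw [hrep t ht]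
  _ ≤ c * Real.exp (-lam * t) := hbound t ht

/-- The internal model `η̇ = M η + N g − M N x₂` produces an
exponentially convergent estimate `ϱ̂ := η − N x₂` of the exosystem state `ϱ`;
in fact the error satisfies `d/dt (ϱ̂ − ϱ) = M (ϱ̂ − ϱ)` and `M` is Hurwitz. -/
theorem stmt1 {rbar n₂ : ℕ}
    (M Φ T : Matrix (Fin rbar) (Fin rbar) ℝ)
    (N : Matrix (Fin rbar) (Fin n₂) ℝ) (Γ : Matrix (Fin n₂) (Fin rbar) ℝ)
    (hM : Hurwitz M) (hT : IsUnit T) (hSyl : T * Φ - M * T = N * Γ)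
    (g : ℝ → EuclideanSpace ℝ (Fin n₂)) (hg : ContinuousOn g (Set.Ici 0))
    (ϱ η : ℝ → EuclideanSpace ℝ (Fin rbar)) (x₂ : ℝ → EuclideanSpace ℝ (Fin n₂))
    (hϱ : ∀ t ≥ (0:ℝ), HasDerivAt ϱ (Matrix.toEuclideanLin (T * Φ * T⁻¹) (ϱ t)) t)
    (hx₂ : ∀ t ≥ (0:ℝ), HasDerivAt x₂
      (g t - Matrix.toEuclideanLin (Γ * T⁻¹) (ϱ t)) t)
    (hη : ∀ t ≥ (0:ℝ), HasDerivAt η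
      (Matrix.toEuclideanLin M (η t) + Matrix.toEuclideanLin N (g t)
        - Matrix.toEuclideanLin (M * N) (x₂ t)) t) :
    (∀ t ≥ (0:ℝ), HasDerivAt (fun s => (η s - Matrix.toEuclideanLin N (x₂ s)) - ϱ s)
        (Matrix.toEuclideanLin M ((η t - Matrix.toEuclideanLin N (x₂ t)) - ϱ t)) t)
    ∧ ExpDecay (fun t => (η t - Matrix.toEuclideanLin N (x₂ t)) - ϱ t) := by
  obtain ⟨h1, h2⟩ := stmt1' M Φ T N Γ hM hT hSyl g hg ϱ η x₂ hϱ hx₂ hη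
  exact ⟨h1, h2⟩
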